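/- Let k ≥ 2 be an integer and let x₀, x₁, x₂ be i.i.d. random variables uniformly distributed on {1, 2, ..., k}. Let M := E(|x₁ - x₀|). Then Cov(|x₁ - x₀|, |x₂ - x₁|) = E((|x₁ - x₀| - M)(|x₂ - x₁| - M)) = (k - 1)(k - 2)(k + 2)(k + 1)/(180k²). -/

import Mathlib

open MeasureTheory ProbabilityTheory
open scoped ENNReal

/-- The uniform probability measure on the integers `{1, ..., k}` (as a measure on `ℕ`). -/
noncomputable def unifMeasure (k : ℕ) : Measure ℕ :=
  (k : ℝ≥0∞)⁻¹ • ∑ i ∈ Finset.Icc 1 k, Measure.dirac i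

namespace CovAux

lemma sum_quartic (c0 c1 c2 c3 c4 : ℝ) (n : ℕ) :
    ∑ b ∈ Finset.Ioc 0 n,
        (c4*(b:ℝ)^4 + c3*(b:ℝ)^3 + c2*(b:ℝ)^2 + c1*(b:ℝ) + c0)
      = c4*((n:ℝ)*((n:ℝ)+1)*(2*(n:ℝ)+1)*(3*(n:ℝ)^2+3*(n:ℝ)-1)/30)
        + c3*((n:ℝ)^2*((n:ℝ)+1)^2/4)
        + c2*((n:ℝ)*((n:ℝ)+1)*(2*(n:ℝ)+1)/6)
        + c1*((n:ℝ)*((n:ℝ)+1)/2) + c0*(n:ℝ) := by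
  induction n with
  | zero => simp
  | succ n ih =>
      rw [Finset.sum_Ioc_succ_top (Nat.zero_le n), ih]
      push_cast
      ring

lemma sum_lin (c : ℝ) (n : ℕ) :
    ∑ a ∈ Finset.Ioc 0 n, (c - (a:ℝ)) = c*(n:ℝ) - (n:ℝ)*((n:ℝ)+1)/2 := by
  induction n with
  | zero => simp
  | succ n ih =>
      rw [Finset.sum_Ioc_succ_top (Nat.zero_le n), ih]
      push_cast
      ring

lemma sum_abs {k b : ℕ} (hb : b ∈ Finset.Ioc 0 k) :
    ∑ a ∈ Finset.Ioc 0 k, |(b:ℝ) - (a:ℝ)|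
      = (b:ℝ)^2 - ((k:ℝ)+1)*(b:ℝ) + ((k:ℝ)^2+(k:ℝ))/2 := by
  obtain ⟨hb0, hbk⟩ := Finset.mem_Ioc.mp hb
  rw [← Finset.sum_Ioc_consecutive _ (Nat.zero_le b) hbk]
  have h1 : ∑ a ∈ Finset.Ioc 0 b, |(b:ℝ) - (a:ℝ)| = ∑ a ∈ Finset.Ioc 0 b, ((b:ℝ) - (a:ℝ)) := by
    refine Finset.sum_congr rfl fun a ha => abs_of_nonneg ?_
    have := (Finset.mem_Ioc.mp ha).2
    have : (a:ℝ) ≤ (b:ℝ) := Nat.cast_le.mpr this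
    linarith
  have h2 : ∑ a ∈ Finset.Ioc b k, |(b:ℝ) - (a:ℝ)|
      = ∑ a ∈ Finset.Ioc b k, (-((b:ℝ) - (a:ℝ))) := by
    refine Finset.sum_congr rfl fun a ha => abs_of_nonpos ?_
    have := (Finset.mem_Ioc.mp ha).1
    have : (b:ℝ) ≤ (a:ℝ) := Nat.cast_le.mpr this.le
    linarith
  have h3 : ∑ a ∈ Finset.Ioc b k, ((b:ℝ) - (a:ℝ))
      = ∑ a ∈ Finset.Ioc 0 k, ((b:ℝ) - (a:ℝ)) - ∑ a ∈ Finset.Ioc 0 b, ((b:ℝ) - (a:ℝ)) := by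
    rw [← Finset.sum_Ioc_consecutive _ (Nat.zero_le b) hbk]
    ring
  rw [h1, h2, Finset.sum_neg_distrib, h3, sum_lin, sum_lin]
  ring



instance unif_finite (k : ℕ) : IsFiniteMeasure (unifMeasure k) := by
  constructor
  show ((k : ℝ≥0∞)⁻¹ • ∑ i ∈ Finset.Icc 1 k, Measure.dirac i) Set.univ < ⊤
  rw [Measure.smul_apply, Measure.finset_sum_apply]
  simp only [measure_univ, Finset.sum_const, Nat.card_Icc, Nat.add_sub_cancel,
    nsmul_eq_mul, mul_one]
  rcases Nat.eq_zero_or_pos k with h | h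
  · simp [h]
  · have h1 : (k:ℝ≥0∞)⁻¹ * (k:ℝ≥0∞) = 1 :=
      ENNReal.inv_mul_cancel (by exact_mod_cast h.ne') (by simp)
    rw [smul_eq_mul, h1]
    exact ENNReal.one_lt_top

lemma unif_map {β : Type*} [MeasurableSpace β] (k : ℕ) (g : ℕ → β) :
    (unifMeasure k).map g = (k : ℝ≥0∞)⁻¹ • ∑ a ∈ Finset.Icc 1 k, Measure.dirac (g a) := by
  have hg : Measurable g := measurable_from_top
  rw [unifMeasure, Measure.map_smul, ← Measure.sum_coe_finset,
    Measure.map_sum hg.aemeasurable]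
  simp_rw [Measure.map_dirac' hg]
  rw [Measure.sum_coe_finset (Finset.Icc 1 k) fun a => Measure.dirac (g a)]

lemma map_usum {β γ : Type*} [MeasurableSpace β] [MeasurableSpace γ] (c : ℝ≥0∞)
    (s : Finset β) {g : β → γ} (hg : Measurable g) :
    (c • ∑ p ∈ s, Measure.dirac p).map g = c • ∑ p ∈ s, Measure.dirac (g p) := by
  rw [Measure.map_smul, ← Measure.sum_coe_finset, Measure.map_sum hg.aemeasurable]
  simp_rw [Measure.map_dirac' hg]
  rw [Measure.sum_coe_finset s fun p => Measure.dirac (g p)]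

lemma unif_prod {β : Type*} [MeasurableSpace β] (k : ℕ) (ν : Measure β) [SFinite ν] :
    (unifMeasure k).prod ν = (k : ℝ≥0∞)⁻¹ • ∑ a ∈ Finset.Icc 1 k, ν.map (Prod.mk a) := by
  ext s hs
  rw [Measure.prod_apply hs]
  show ∫⁻ x, ν (Prod.mk x ⁻¹' s) ∂((k : ℝ≥0∞)⁻¹ • ∑ i ∈ Finset.Icc 1 k, Measure.dirac i) = _
  rw [lintegral_smul_measure, lintegral_finset_sum_measure, Measure.smul_apply,
    Measure.finset_sum_apply]
  congr 1
  refine Finset.sum_congr rfl fun a _ => ?_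
  rw [lintegral_dirac, Measure.map_apply measurable_prodMk_left hs]

lemma integral_usum {β : Type*} [MeasurableSpace β] [MeasurableSingletonClass β]
    (c : ℝ≥0∞) (s : Finset β) {f : β → ℝ} (hf : Measurable f) :
    ∫ x, f x ∂(c • ∑ p ∈ s, Measure.dirac p) = c.toReal * ∑ p ∈ s, f p := by
  have hint : ∀ p ∈ s, Integrable f (Measure.dirac p) := by
    intro p _
    refine ⟨hf.aestronglyMeasurable, ?_⟩
    simp [HasFiniteIntegral, lintegral_dirac]
  rw [integral_smul_measure, integral_finset_sum_measure hint]
  simp only [integral_dirac, smul_eq_mul]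


end CovAux

theorem covariance_increments_uniform
    {Ω : Type*} [MeasurableSpace Ω] (μ : Measure Ω) [IsProbabilityMeasure μ]
    (k : ℕ) (hk : 2 ≤ k) (x : Fin 3 → Ω → ℕ)
    (hmeas : ∀ i, Measurable (x i))
    (hdist : ∀ i, Measure.map (x i) μ = unifMeasure k)
    (hindep : iIndepFun x μ)
    (M : ℝ) (hM : M = ∫ ω, |(x 1 ω : ℝ) - (x 0 ω : ℝ)| ∂μ) :
    ∫ ω, (|(x 1 ω : ℝ) - (x 0 ω : ℝ)| - M) * (|(x 2 ω : ℝ) - (x 1 ω : ℝ)| - M) ∂μ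
      = ((k : ℝ) - 1) * ((k : ℝ) - 2) * ((k : ℝ) + 2) * ((k : ℝ) + 1)
          / (180 * (k : ℝ) ^ 2) := by
  classical
  have hcast : Measurable fun n : ℕ => (n : ℝ) := measurable_from_top
  have h1m : Measurable fun q : ℕ × ℕ × ℕ => ((q.1 : ℕ) : ℝ) := hcast.comp measurable_fst
  have h2m : Measurable fun q : ℕ × ℕ × ℕ => ((q.2.1 : ℕ) : ℝ) :=
    hcast.comp (measurable_fst.comp measurable_snd)
  have h3m : Measurable fun q : ℕ × ℕ × ℕ => ((q.2.2 : ℕ) : ℝ) :=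
    hcast.comp (measurable_snd.comp measurable_snd)
  have hFm : Measurable fun q : ℕ × ℕ × ℕ =>
      (|(q.2.1 : ℝ) - (q.1 : ℝ)| - M) * (|(q.2.2 : ℝ) - (q.2.1 : ℝ)| - M) :=
    (((h2m.sub h1m).abs).sub measurable_const).mul (((h3m.sub h2m).abs).sub measurable_const)
  have hGm : Measurable fun p : ℕ × ℕ => |(p.2 : ℝ) - (p.1 : ℝ)| :=
    ((hcast.comp measurable_snd).sub (hcast.comp measurable_fst)).abs
  -- joint laws
  have h12 : μ.map (fun ω => (x 1 ω, x 2 ω)) = (unifMeasure k).prod (unifMeasure k) := by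
    have h := (indepFun_iff_map_prod_eq_prod_map_map (hmeas 1).aemeasurable
      (hmeas 2).aemeasurable).mp (hindep.indepFun (by decide))
    rwa [hdist 1, hdist 2] at h
  have h01 : μ.map (fun ω => (x 0 ω, x 1 ω)) = (unifMeasure k).prod (unifMeasure k) := by
    have h := (indepFun_iff_map_prod_eq_prod_map_map (hmeas 0).aemeasurable
      (hmeas 1).aemeasurable).mp (hindep.indepFun (by decide))
    rwa [hdist 0, hdist 1] at h
  have h012 : μ.map (fun ω => (x 0 ω, (x 1 ω, x 2 ω)))
      = (unifMeasure k).prod ((unifMeasure k).prod (unifMeasure k)) := by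
    have h := (indepFun_iff_map_prod_eq_prod_map_map (hmeas 0).aemeasurable
      ((hmeas 1).prodMk (hmeas 2)).aemeasurable).mp
      ((hindep.indepFun_prodMk hmeas 1 2 0 (by decide) (by decide)).symm)
    rwa [hdist 0, h12] at h
  -- canonical dirac-sum forms
  have hprod2 : (unifMeasure k).prod (unifMeasure k)
      = ((k : ℝ≥0∞)⁻¹ * (k : ℝ≥0∞)⁻¹) •
          ∑ p ∈ Finset.Icc 1 k ×ˢ Finset.Icc 1 k, Measure.dirac p := by
    rw [CovAux.unif_prod]
    simp_rw [CovAux.unif_map]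
    rw [← Finset.smul_sum, smul_smul, Finset.sum_product]
  have hprod3 : (unifMeasure k).prod ((unifMeasure k).prod (unifMeasure k))
      = ((k : ℝ≥0∞)⁻¹ * ((k : ℝ≥0∞)⁻¹ * (k : ℝ≥0∞)⁻¹)) •
          ∑ q ∈ Finset.Icc 1 k ×ˢ (Finset.Icc 1 k ×ˢ Finset.Icc 1 k), Measure.dirac q := by
    rw [CovAux.unif_prod, hprod2]
    simp_rw [CovAux.map_usum _ _ measurable_prodMk_left]
    rw [← Finset.smul_sum, smul_smul, Finset.sum_product]
  have hk0 : (k : ℝ) ≠ 0 := by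
    have : 0 < k := by omega
    exact_mod_cast this.ne'
  have htoReal : ((k : ℝ≥0∞)⁻¹).toReal = ((k : ℝ))⁻¹ := by
    rw [ENNReal.toReal_inv]; simp
  -- value of M
  have hMeq : M = ((k : ℝ)⁻¹ * (k : ℝ)⁻¹) *
      ∑ p ∈ Finset.Icc 1 k ×ˢ Finset.Icc 1 k, |((p.2 : ℕ) : ℝ) - ((p.1 : ℕ) : ℝ)| := by
    have hT : Measurable fun ω => (x 0 ω, x 1 ω) := (hmeas 0).prodMk (hmeas 1)
    have h := integral_map (μ := μ) hT.aemeasurable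
      (f := fun p : ℕ × ℕ => |(p.2 : ℝ) - (p.1 : ℝ)|) hGm.aestronglyMeasurable
    rw [h01, hprod2, CovAux.integral_usum _ _ hGm] at h
    simp only [ENNReal.toReal_mul, htoReal] at h
    rw [hM, show (∫ ω, |(x 1 ω : ℝ) - (x 0 ω : ℝ)| ∂μ)
      = ∫ ω, |((x 0 ω, x 1 ω).2 : ℝ) - ((x 0 ω, x 1 ω).1 : ℝ)| ∂μ from rfl, ← h]
  -- main integral as a finite sum
  have key : ∫ ω, (|(x 1 ω : ℝ) - (x 0 ω : ℝ)| - M) * (|(x 2 ω : ℝ) - (x 1 ω : ℝ)| - M) ∂μ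
      = ((k : ℝ)⁻¹ * ((k : ℝ)⁻¹ * (k : ℝ)⁻¹)) *
        ∑ q ∈ Finset.Icc 1 k ×ˢ (Finset.Icc 1 k ×ˢ Finset.Icc 1 k),
          (|((q.2.1 : ℕ) : ℝ) - ((q.1 : ℕ) : ℝ)| - M) *
            (|((q.2.2 : ℕ) : ℝ) - ((q.2.1 : ℕ) : ℝ)| - M) := by
    have hT : Measurable fun ω => (x 0 ω, (x 1 ω, x 2 ω)) :=
      (hmeas 0).prodMk ((hmeas 1).prodMk (hmeas 2))
    have h := integral_map (μ := μ) hT.aemeasurable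
      (f := fun q : ℕ × ℕ × ℕ =>
        (|(q.2.1 : ℝ) - (q.1 : ℝ)| - M) * (|(q.2.2 : ℝ) - (q.2.1 : ℝ)| - M))
      hFm.aestronglyMeasurable
    rw [h012, hprod3, CovAux.integral_usum _ _ hFm] at h
    simp only [ENNReal.toReal_mul, htoReal] at h
    rw [show (∫ ω, (|(x 1 ω : ℝ) - (x 0 ω : ℝ)| - M) * (|(x 2 ω : ℝ) - (x 1 ω : ℝ)| - M) ∂μ)
      = ∫ ω, (|((x 1 ω : ℕ) : ℝ) - ((x 0 ω : ℕ) : ℝ)| - M) *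
          (|((x 2 ω : ℕ) : ℝ) - ((x 1 ω : ℕ) : ℝ)| - M) ∂μ from rfl, ← h]
  -- pass to Ioc
  have hIoc : Finset.Icc 1 k = Finset.Ioc 0 k := by
    ext a; simp only [Finset.mem_Icc, Finset.mem_Ioc]; omega
  rw [hIoc] at key hMeq
  -- compute M
  have e1 : ∀ a ∈ Finset.Ioc 0 k, (∑ b ∈ Finset.Ioc 0 k, |(b : ℝ) - (a : ℝ)|)
      = (a : ℝ)^2 - ((k : ℝ)+1)*(a : ℝ) + ((k : ℝ)^2+(k : ℝ))/2 := by
    intro a ha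
    rw [Finset.sum_congr rfl ((fun b _ => abs_sub_comm _ _) :
      ∀ b ∈ Finset.Ioc 0 k, |((b : ℕ) : ℝ) - ((a : ℕ) : ℝ)| = |((a : ℕ) : ℝ) - ((b : ℕ) : ℝ)|)]
    exact CovAux.sum_abs ha
  have hMval : M = ((k : ℝ)^2 - 1)/(3*(k : ℝ)) := by
    rw [hMeq, Finset.sum_product]
    rw [Finset.sum_congr rfl fun a ha => e1 a ha]
    rw [Finset.sum_congr rfl (fun a _ => by ring :
      ∀ a ∈ Finset.Ioc 0 k, (a : ℝ)^2 - ((k : ℝ)+1)*(a : ℝ) + ((k : ℝ)^2+(k : ℝ))/2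
        = 0*(a:ℝ)^4 + 0*(a:ℝ)^3 + 1*(a:ℝ)^2 + (-((k : ℝ)+1))*(a:ℝ) + ((k : ℝ)^2+(k : ℝ))/2),
      CovAux.sum_quartic]
    field_simp
    ring
  have hkM : (k : ℝ) * M = ((k : ℝ)^2 - 1)/3 := by
    rw [hMval]; field_simp
  -- compute the triple sum
  rw [key]
  rw [Finset.sum_product]
  simp only [Finset.sum_product]
  rw [Finset.sum_comm]
  have inner : ∀ b ∈ Finset.Ioc 0 k,
      (∑ a ∈ Finset.Ioc 0 k, ∑ c ∈ Finset.Ioc 0 k,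
        (|(b : ℝ) - (a : ℝ)| - M) * (|(c : ℝ) - (b : ℝ)| - M))
      = ((b : ℝ)^2 - ((k : ℝ)+1)*(b : ℝ) + ((k : ℝ)^2+(k : ℝ))/2 - (k : ℝ)*M)^2 := by
    intro b hb
    have hc : (∑ c ∈ Finset.Ioc 0 k, (|(c : ℝ) - (b : ℝ)| - M))
        = (b : ℝ)^2 - ((k : ℝ)+1)*(b : ℝ) + ((k : ℝ)^2+(k : ℝ))/2 - (k : ℝ)*M := by
      rw [Finset.sum_sub_distrib, Finset.sum_const, Nat.card_Ioc, nsmul_eq_mul,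
        Finset.sum_congr rfl ((fun c _ => abs_sub_comm _ _) :
          ∀ c ∈ Finset.Ioc 0 k, |((c : ℕ) : ℝ) - ((b : ℕ) : ℝ)| = |((b : ℕ) : ℝ) - ((c : ℕ) : ℝ)|),
        CovAux.sum_abs hb]
      simp
    have ha : (∑ a ∈ Finset.Ioc 0 k, (|(b : ℝ) - (a : ℝ)| - M))
        = (b : ℝ)^2 - ((k : ℝ)+1)*(b : ℝ) + ((k : ℝ)^2+(k : ℝ))/2 - (k : ℝ)*M := by
      rw [Finset.sum_sub_distrib, Finset.sum_const, Nat.card_Ioc, nsmul_eq_mul,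
        CovAux.sum_abs hb]
      simp
    calc (∑ a ∈ Finset.Ioc 0 k, ∑ c ∈ Finset.Ioc 0 k,
            (|(b : ℝ) - (a : ℝ)| - M) * (|(c : ℝ) - (b : ℝ)| - M))
        = ∑ a ∈ Finset.Ioc 0 k,
            (|(b : ℝ) - (a : ℝ)| - M) * ∑ c ∈ Finset.Ioc 0 k, (|(c : ℝ) - (b : ℝ)| - M) := by
          exact Finset.sum_congr rfl fun a _ => (Finset.mul_sum _ _ _).symm
      _ = (∑ a ∈ Finset.Ioc 0 k, (|(b : ℝ) - (a : ℝ)| - M)) *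
            (∑ c ∈ Finset.Ioc 0 k, (|(c : ℝ) - (b : ℝ)| - M)) := by
          rw [← Finset.sum_mul]
      _ = _ := by rw [ha, hc]; ring
  rw [Finset.sum_congr rfl inner]
  rw [hkM]
  rw [Finset.sum_congr rfl (fun b _ => by ring :
    ∀ b ∈ Finset.Ioc 0 k,
      ((b : ℝ)^2 - ((k : ℝ)+1)*(b : ℝ) + ((k : ℝ)^2+(k : ℝ))/2 - ((k : ℝ)^2-1)/3)^2
      = 1*(b:ℝ)^4 + (-(2*((k : ℝ)+1)))*(b:ℝ)^3
        + (((k : ℝ)+1)^2 + 2*(((k : ℝ)^2+(k : ℝ))/2 - ((k : ℝ)^2-1)/3))*(b:ℝ)^2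
        + (-(2*(((k : ℝ)^2+(k : ℝ))/2 - ((k : ℝ)^2-1)/3)*((k : ℝ)+1)))*(b:ℝ)
        + (((k : ℝ)^2+(k : ℝ))/2 - ((k : ℝ)^2-1)/3)^2),
    CovAux.sum_quartic]
  field_simp
  ring
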